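/- arXiv:2310.04966 — 3 statements merged into one kernel-verified Lean document; each statement's English description precedes it below -/
import Mathlib

section
/- Let U have orthonormal columns and y* = argmin_y ‖U y − b‖_2^2. If ‖U^T S^T S U − I‖_2 ≤ 1/2 and ‖U^T S^T S (b − U y*)‖_2^2 ≤ ε ‖b − U y*‖_2^2, then the minimizer ỹ* of ‖S U y − S b‖_2^2 satisfies ‖U ỹ* − b‖_2^2 ≤ (1 + 4ε) ‖U y* − b‖_2^2. -/
open Matrix
open scoped Matrix.Norms.L2Operator

lemma sum_sq_eq_dot {n : ℕ} (v : Fin n → ℝ) : ∑ i, v i ^ 2 = v ⬝ᵥ v := by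
  simp [dotProduct, sq]

lemma mulVec_dot {m n : ℕ} (A : Matrix (Fin m) (Fin n) ℝ) (x : Fin n → ℝ) (y : Fin m → ℝ) :
    (A *ᵥ x) ⬝ᵥ y = x ⬝ᵥ (Aᵀ *ᵥ y) := by
  rw [dotProduct_mulVec, vecMul_transpose]

lemma norm_sq_eq {n : ℕ} (v : Fin n → ℝ) :
    ‖(EuclideanSpace.equiv (Fin n) ℝ).symm v‖ ^ 2 = ∑ i, v i ^ 2 := by
  rw [EuclideanSpace.norm_eq, Real.sq_sqrt (by positivity)]
  simp [Real.norm_eq_abs, sq_abs]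

/-- Main regression bound: under the subspace embedding and approximate matrix-vector
multiplication conditions, the subsampled least-squares solution `ỹ*` satisfies
`‖U ỹ* − b‖₂² ≤ (1 + 4ε) ‖U y* − b‖₂²`. -/
theorem subsampled_regression_bound (n d k : ℕ)
    (U : Matrix (Fin n) (Fin d) ℝ) (S : Matrix (Fin k) (Fin n) ℝ)
    (b : Fin n → ℝ) (ε : ℝ) (hε : 0 < ε) (hU : Uᵀ * U = 1)
    (hrank : (S * U).rank = d)
    (ystar ytilde : Fin d → ℝ)
    (hmin : ∀ y : Fin d → ℝ,
      ∑ i, (U *ᵥ ystar - b) i ^ 2 ≤ ∑ i, (U *ᵥ y - b) i ^ 2)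
    (hnormal : (S * U)ᵀ *ᵥ ((S * U) *ᵥ ytilde - S *ᵥ b) = 0)
    (hembed : ‖Uᵀ * Sᵀ * S * U - 1‖ ≤ 1 / 2)
    (hmatvec : ∑ j, (Uᵀ *ᵥ (Sᵀ *ᵥ (S *ᵥ (b - U *ᵥ ystar)))) j ^ 2 ≤
      ε * ∑ i, (b - U *ᵥ ystar) i ^ 2) :
    ∑ i, (U *ᵥ ytilde - b) i ^ 2 ≤ (1 + 4 * ε) * ∑ i, (U *ᵥ ystar - b) i ^ 2 := by
  set r : Fin n → ℝ := U *ᵥ ystar - b with hr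
  set g : Fin d → ℝ := Uᵀ *ᵥ r with hg
  clear_value r g
  have hUtU : ∀ x : Fin d → ℝ, Uᵀ *ᵥ (U *ᵥ x) = x := by
    intro x; rw [mulVec_mulVec, hU, one_mulVec]
  -- Step 1: g = 0
  have hg0 : g = 0 := by
    have h1 := hmin (ystar - g)
    have expand : U *ᵥ (ystar - g) - b = r - U *ᵥ g := by
      rw [mulVec_sub, hr]; abel
    rw [expand, sum_sq_eq_dot, sum_sq_eq_dot] at h1
    have e1 : (U *ᵥ g) ⬝ᵥ r = g ⬝ᵥ g := by rw [mulVec_dot, ← hg]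
    have e2 : r ⬝ᵥ (U *ᵥ g) = g ⬝ᵥ g := by rw [dotProduct_comm, e1]
    have e3 : (U *ᵥ g) ⬝ᵥ (U *ᵥ g) = g ⬝ᵥ g := by rw [mulVec_dot, hUtU]
    have h2 : (r - U *ᵥ g) ⬝ᵥ (r - U *ᵥ g) = r ⬝ᵥ r - g ⬝ᵥ g := by
      rw [sub_dotProduct, dotProduct_sub, dotProduct_sub, e1, e2, e3]; ring
    rw [h2] at h1
    have hnng : 0 ≤ g ⬝ᵥ g := by
      rw [← sum_sq_eq_dot]; positivity
    exact dotProduct_self_eq_zero.mp (le_antisymm (by linarith) hnng)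
  -- Step 2: normal equations give M w = rvec
  set M : Matrix (Fin d) (Fin d) ℝ := Uᵀ * Sᵀ * S * U with hM
  set w : Fin d → ℝ := ytilde - ystar with hw
  set rvec : Fin d → ℝ := Uᵀ *ᵥ (Sᵀ *ᵥ (S *ᵥ (b - U *ᵥ ystar))) with hrvec
  clear_value M w rvec
  have hMw : M *ᵥ w = rvec := by
    have h := hnormal
    rw [hM, hw, hrvec]
    simp only [transpose_mul, mulVec_sub, mulVec_mulVec, Matrix.mul_assoc, sub_eq_zero] at h ⊢
    rw [h]
  -- Step 3: ∑ w² ≤ 4 ε ∑ (b - U ystar)²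
  have hwsq : ∑ i, w i ^ 2 ≤ 4 * ε * ∑ i, (b - U *ᵥ ystar) i ^ 2 := by
    set e := (EuclideanSpace.equiv (Fin d) ℝ).symm with he
    have hwdec : w = M *ᵥ w - (M - 1) *ᵥ w := by
      rw [sub_mulVec, one_mulVec]; abel
    have hdecomp : e w = e (M *ᵥ w) - e ((M - 1) *ᵥ w) := by
      conv_lhs => rw [hwdec]
      rw [map_sub]
    have hsplit : ‖e w‖ ≤ ‖e rvec‖ + (1/2) * ‖e w‖ := by
      calc ‖e w‖ ≤ ‖e (M *ᵥ w)‖ + ‖e ((M - 1) *ᵥ w)‖ := by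
            rw [hdecomp]; exact norm_sub_le _ _
        _ ≤ ‖e rvec‖ + (1/2) * ‖e w‖ := by
            rw [hMw]
            refine add_le_add le_rfl ?_
            have h2 := Matrix.l2_opNorm_mulVec (M - 1) (e w)
            have h3 : ‖M - 1‖ * ‖e w‖ ≤ (1/2) * ‖e w‖ :=
              mul_le_mul_of_nonneg_right hembed (norm_nonneg _)
            exact h2.trans h3
    have hsq : ‖e w‖ ^ 2 ≤ 4 * ‖e rvec‖ ^ 2 := by
      nlinarith [norm_nonneg (e w), norm_nonneg (e rvec)]
    rw [he, norm_sq_eq, norm_sq_eq] at hsq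
    calc ∑ i, w i ^ 2 ≤ 4 * ∑ i, rvec i ^ 2 := hsq
      _ ≤ 4 * (ε * ∑ i, (b - U *ᵥ ystar) i ^ 2) := by linarith [hmatvec]
      _ = 4 * ε * ∑ i, (b - U *ᵥ ystar) i ^ 2 := by ring
  -- Step 4: conclude
  have hexp : ∑ i, (U *ᵥ ytilde - b) i ^ 2 = ∑ i, r i ^ 2 + ∑ i, w i ^ 2 := by
    have e1 : U *ᵥ ytilde - b = r + U *ᵥ w := by
      rw [hw, mulVec_sub, hr]; abel
    rw [e1, sum_sq_eq_dot, sum_sq_eq_dot, sum_sq_eq_dot]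
    have cross : (U *ᵥ w) ⬝ᵥ r = 0 := by
      rw [mulVec_dot, ← hg, hg0, dotProduct_zero]
    have uu : (U *ᵥ w) ⬝ᵥ (U *ᵥ w) = w ⬝ᵥ w := by
      rw [mulVec_dot, hUtU]
    rw [add_dotProduct, dotProduct_add, dotProduct_add, cross,
      dotProduct_comm r (U *ᵥ w), cross, uu]
    ring
  have hneg : ∑ i, (b - U *ᵥ ystar) i ^ 2 = ∑ i, r i ^ 2 := by
    apply Finset.sum_congr rfl
    intro i _
    have h : (b - U *ᵥ ystar) i = -(r i) := by simp [hr]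
    rw [h, neg_pow]; ring
  rw [hexp]
  rw [hneg] at hwsq
  linarith [hmin ystar]
end

section
/- Let ξ_1,...,ξ_n be {0,1}-valued random variables with marginals E[ξ_i] = p̃_i ∈ (0,1], covariances c_{il} = E[ξ_iξ_l] − p̃_ip̃_l, and suppose for every i, Σ_l |E[ξ_iξ_l]/p̃_i − p̃_l| ≤ D. Then for any real weights w_1,...,w_n, E[(Σ_i (ξ_i/p̃_i − 1) w_i)^2] ≤ D Σ_i w_i^2 / p̃_i. -/
open MeasureTheory

lemma aux_amgm (pi pl q wi wl : ℝ) (hpi : 0 < pi) (hpl : 0 < pl) :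
    wi * wl * q ≤ (wi ^ 2 / pi * (|q| * pl) + wl ^ 2 / pl * (|q| * pi)) / 2 := by
  have h1 : wi * wl * q ≤ |wi| * |wl| * |q| := by
    rw [← abs_mul, ← abs_mul]; exact le_abs_self _
  have e : (|wi| * pl - |wl| * pi) ^ 2
      = wi ^ 2 * pl ^ 2 - 2 * (|wi| * |wl|) * (pi * pl) + wl ^ 2 * pi ^ 2 := by
    rw [sub_sq, mul_pow, mul_pow, sq_abs, sq_abs]; ring
  have h2 : 2 * (|wi| * |wl|) * (pi * pl) ≤ wi ^ 2 * pl ^ 2 + wl ^ 2 * pi ^ 2 := by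
    nlinarith [sq_nonneg (|wi| * pl - |wl| * pi), e]
  have h3 : wi * wl * q * (pi * pl) ≤ |wi| * |wl| * |q| * (pi * pl) :=
    mul_le_mul_of_nonneg_right h1 (by positivity)
  have h4 : |q| * (2 * (|wi| * |wl|) * (pi * pl)) ≤ |q| * (wi ^ 2 * pl ^ 2 + wl ^ 2 * pi ^ 2) :=
    mul_le_mul_of_nonneg_left h2 (abs_nonneg q)
  rw [div_mul_eq_mul_div, div_mul_eq_mul_div, div_add_div _ _ hpi.ne' hpl.ne', div_div,
    le_div_iff₀ (by positivity)]
  nlinarith [h3, h4]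

/-- Variance bound under the one-sided `ℓ∞`-independence condition with `S = ∅`:
for binary random variables `ξ_i` with marginals `p̃_i` and
`Σ_l |E[ξ_i ξ_l]/p̃_i − p̃_l| ≤ D` for all `i`, one has
`E[(Σ_i (ξ_i/p̃_i − 1) w_i)²] ≤ D Σ_i w_i²/p̃_i`. -/
theorem weighted_variance_bound_linfty_indep {Ω : Type*} [MeasurableSpace Ω]
    (μ : Measure Ω) [IsProbabilityMeasure μ] (n : ℕ)
    (ξ : Fin n → Ω → ℝ) (hmeas : ∀ i, Measurable (ξ i))
    (hbin : ∀ i ω, ξ i ω = 0 ∨ ξ i ω = 1)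
    (p : Fin n → ℝ) (hp : ∀ i, p i ∈ Set.Ioc (0 : ℝ) 1)
    (hmarg : ∀ i, (∫ ω, ξ i ω ∂μ) = p i)
    (D : ℝ)
    (hinf : ∀ i, ∑ l, |(∫ ω, ξ i ω * ξ l ω ∂μ) / p i - p l| ≤ D)
    (w : Fin n → ℝ) :
    (∫ ω, (∑ i, (ξ i ω / p i - 1) * w i) ^ 2 ∂μ) ≤ D * ∑ i, w i ^ 2 / p i := by
  have hp0 : ∀ i, 0 < p i := fun i => (hp i).1
  have hp1 : ∀ i, p i ≤ 1 := fun i => (hp i).2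
  have hbdd : ∀ i ω, |ξ i ω| ≤ 1 := by
    intro i ω; rcases hbin i ω with h | h <;> simp [h]
  have hint : ∀ i, Integrable (ξ i) μ := by
    intro i
    refine (integrable_const (1:ℝ)).mono' (hmeas i).aestronglyMeasurable ?_
    filter_upwards with ω
    rw [Real.norm_eq_abs]; simpa using hbdd i ω
  have hint2 : ∀ i l, Integrable (fun ω => ξ i ω * ξ l ω) μ := by
    intro i l
    refine (integrable_const (1:ℝ)).mono' ((hmeas i).mul (hmeas l)).aestronglyMeasurable ?_
    filter_upwards with ω
    rw [Real.norm_eq_abs, abs_mul]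
    nlinarith [hbdd i ω, hbdd l ω, abs_nonneg (ξ i ω), abs_nonneg (ξ l ω)]
  have habdd : ∀ i ω, |ξ i ω / p i - 1| ≤ 1 / p i := by
    intro i ω
    have h1 : 1 ≤ 1 / p i := by rw [le_div_iff₀ (hp0 i)]; simpa using hp1 i
    rcases hbin i ω with h | h
    · rw [h]; simpa using h1
    · rw [h, abs_of_nonneg (by linarith)]; linarith
  have hintaa : ∀ i l, Integrable
      (fun ω => (ξ i ω / p i - 1) * w i * ((ξ l ω / p l - 1) * w l)) μ := by
    intro i l
    refine (integrable_const ((1 / p i * |w i|) * (1 / p l * |w l|))).mono'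
      (((((hmeas i).div_const _).sub measurable_const).mul_const (w i)).mul
        ((((hmeas l).div_const _).sub measurable_const).mul_const (w l))).aestronglyMeasurable ?_
    filter_upwards with ω
    rw [Real.norm_eq_abs, abs_mul, abs_mul, abs_mul]
    exact mul_le_mul (mul_le_mul_of_nonneg_right (habdd i ω) (abs_nonneg (w i)))
      (mul_le_mul_of_nonneg_right (habdd l ω) (abs_nonneg (w l)))
      (by positivity) (mul_nonneg (le_of_lt (div_pos one_pos (hp0 i))) (abs_nonneg _))
  have key : ∀ i l, (∫ ω, (ξ i ω / p i - 1) * (ξ l ω / p l - 1) ∂μ)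
      = (∫ ω, ξ i ω * ξ l ω ∂μ) / (p i * p l) - 1 := by
    intro i l
    have ia : Integrable (fun ω => ξ i ω * ξ l ω / (p i * p l)) μ := (hint2 i l).div_const _
    have ib : Integrable (fun ω => ξ i ω / p i) μ := (hint i).div_const _
    have ic : Integrable (fun ω => ξ l ω / p l) μ := (hint l).div_const _
    have hrw : (fun ω => (ξ i ω / p i - 1) * (ξ l ω / p l - 1))
        = fun ω => ξ i ω * ξ l ω / (p i * p l) - ξ i ω / p i - ξ l ω / p l + 1 := by
      have h1 := (hp0 i).ne'
      have h2 := (hp0 l).ne'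
      funext ω
      field_simp
      ring
    have iab : Integrable (fun ω => ξ i ω * ξ l ω / (p i * p l) - ξ i ω / p i) μ := ia.sub ib
    have iabc : Integrable
        (fun ω => ξ i ω * ξ l ω / (p i * p l) - ξ i ω / p i - ξ l ω / p l) μ := iab.sub ic
    calc (∫ ω, (ξ i ω / p i - 1) * (ξ l ω / p l - 1) ∂μ)
        = ∫ ω, (ξ i ω * ξ l ω / (p i * p l) - ξ i ω / p i - ξ l ω / p l + 1) ∂μ := by
          rw [hrw]
      _ = (∫ ω, (ξ i ω * ξ l ω / (p i * p l) - ξ i ω / p i - ξ l ω / p l) ∂μ)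
          + ∫ _, (1:ℝ) ∂μ := integral_add iabc (integrable_const 1)
      _ = ((∫ ω, (ξ i ω * ξ l ω / (p i * p l) - ξ i ω / p i) ∂μ)
          - ∫ ω, ξ l ω / p l ∂μ) + ∫ _, (1:ℝ) ∂μ := by
          rw [integral_sub iab ic]
      _ = (((∫ ω, ξ i ω * ξ l ω / (p i * p l) ∂μ) - ∫ ω, ξ i ω / p i ∂μ)
          - ∫ ω, ξ l ω / p l ∂μ) + ∫ _, (1:ℝ) ∂μ := by rw [integral_sub ia ib]
      _ = (∫ ω, ξ i ω * ξ l ω ∂μ) / (p i * p l) - 1 := by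
          rw [integral_div, integral_div, integral_div, hmarg, hmarg, integral_const]
          simp only [measure_univ, ENNReal.toReal_one, probReal_univ, smul_eq_mul, one_mul]
          rw [div_self (hp0 i).ne', div_self (hp0 l).ne']
          ring
  have expand : (∫ ω, (∑ i, (ξ i ω / p i - 1) * w i) ^ 2 ∂μ)
      = ∑ i, ∑ l, (w i * w l) * ((∫ ω, ξ i ω * ξ l ω ∂μ) / (p i * p l) - 1) := by
    have hrw : (fun ω => (∑ i, (ξ i ω / p i - 1) * w i) ^ 2)
        = fun ω => ∑ i, ∑ l, ((ξ i ω / p i - 1) * w i) * ((ξ l ω / p l - 1) * w l) := by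
      funext ω
      rw [sq, Finset.sum_mul_sum]
    rw [hrw, integral_finset_sum _ (fun i _ =>
      integrable_finset_sum _ (fun l _ => hintaa i l))]
    refine Finset.sum_congr rfl fun i _ => ?_
    rw [integral_finset_sum _ (fun l _ => hintaa i l)]
    refine Finset.sum_congr rfl fun l _ => ?_
    have h2 : (fun ω => (ξ i ω / p i - 1) * w i * ((ξ l ω / p l - 1) * w l))
        = fun ω => (w i * w l) * ((ξ i ω / p i - 1) * (ξ l ω / p l - 1)) := by
      funext ω; ring
    rw [h2, integral_const_mul, key i l]
  rw [expand]
  have term : ∀ i l, (w i * w l) * ((∫ ω, ξ i ω * ξ l ω ∂μ) / (p i * p l) - 1)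
      ≤ (w i ^ 2 / p i * |(∫ ω, ξ i ω * ξ l ω ∂μ) / p i - p l|
        + w l ^ 2 / p l * |(∫ ω, ξ l ω * ξ i ω ∂μ) / p l - p i|) / 2 := by
    intro i l
    have hT : (∫ ω, ξ l ω * ξ i ω ∂μ) = ∫ ω, ξ i ω * ξ l ω ∂μ := by
      simp only [mul_comm]
    set T := ∫ ω, ξ i ω * ξ l ω ∂μ with hTdef
    have h1 := (hp0 i).ne'
    have h2 := (hp0 l).ne'
    have hmi : |T / p i - p l| = |T / (p i * p l) - 1| * p l := by
      rw [← abs_of_pos (hp0 l), ← abs_mul, abs_of_pos (hp0 l)]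
      congr 1
      field_simp
    have hml : |T / p l - p i| = |T / (p i * p l) - 1| * p i := by
      rw [← abs_of_pos (hp0 i), ← abs_mul, abs_of_pos (hp0 i)]
      congr 1
      field_simp
    rw [hT, hmi, hml]
    exact aux_amgm (p i) (p l) _ (w i) (w l) (hp0 i) (hp0 l)
  calc ∑ i, ∑ l, (w i * w l) * ((∫ ω, ξ i ω * ξ l ω ∂μ) / (p i * p l) - 1)
      ≤ ∑ i, ∑ l, (w i ^ 2 / p i * |(∫ ω, ξ i ω * ξ l ω ∂μ) / p i - p l|
        + w l ^ 2 / p l * |(∫ ω, ξ l ω * ξ i ω ∂μ) / p l - p i|) / 2 :=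
      Finset.sum_le_sum fun i _ => Finset.sum_le_sum fun l _ => term i l
    _ = ∑ i, ∑ l, w i ^ 2 / p i * |(∫ ω, ξ i ω * ξ l ω ∂μ) / p i - p l| := by
      have hswap : ∑ i, ∑ l, w l ^ 2 / p l * |(∫ ω, ξ l ω * ξ i ω ∂μ) / p l - p i|
          = ∑ l, ∑ i, w l ^ 2 / p l * |(∫ ω, ξ l ω * ξ i ω ∂μ) / p l - p i| :=
        Finset.sum_comm
      simp only [add_div, Finset.sum_add_distrib, ← Finset.sum_div]
      rw [hswap]
      ring
    _ = ∑ i, w i ^ 2 / p i * ∑ l, |(∫ ω, ξ i ω * ξ l ω ∂μ) / p i - p l| := by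
      simp [Finset.mul_sum]
    _ ≤ ∑ i, w i ^ 2 / p i * D :=
      Finset.sum_le_sum fun i _ => mul_le_mul_of_nonneg_left (hinf i) (div_nonneg (sq_nonneg _) (hp0 i).le)
    _ = D * ∑ i, w i ^ 2 / p i := by
      rw [Finset.mul_sum]
      exact Finset.sum_congr rfl fun i _ => mul_comm _ _
end

section
/- Let ξ_1,...,ξ_n be binary random variables satisfying k-homogeneity (Σ_i ξ_i = k always) and pairwise negative correlation conditioned on any set S of coordinates being 1. Then the one-sided influence matrix satisfies Σ_j |I_μ^S(i,j)| = 2(1 − q_i) ≤ 2 for every i ∉ S, where q_i = Pr[ξ_i=1 | ξ_ℓ=1 ∀ℓ∈S]; i.e., the distribution is one-sided ℓ∞-independent with parameter 2. -/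
open MeasureTheory
open scoped Classical ENNReal

lemma sum_meas_inter {Ω : Type*} [MeasurableSpace Ω] (μ : Measure Ω) (n k : ℕ)
    (E : Fin n → Set Ω) (hE : ∀ i, MeasurableSet (E i))
    (hhom : ∀ ω : Ω, (Finset.univ.filter (fun j : Fin n => ω ∈ E j)).card = k)
    (C' : Set Ω) :
    ∑ j, μ (E j ∩ C') = (k : ℝ≥0∞) * μ C' := by
  have h1 : ∀ j : Fin n, μ (E j ∩ C') = ∫⁻ ω in C', (E j).indicator 1 ω ∂μ := by
    intro j
    rw [lintegral_indicator_one (hE j), Measure.restrict_apply (hE j)]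
  calc ∑ j, μ (E j ∩ C') = ∫⁻ ω in C', ∑ j, (E j).indicator 1 ω ∂μ := by
        rw [lintegral_finset_sum]
        · exact Finset.sum_congr rfl fun j _ => h1 j
        · exact fun j _ => (measurable_one.indicator (hE j))
    _ = ∫⁻ _ in C', (k : ℝ≥0∞) ∂μ := by
        apply lintegral_congr
        intro ω
        have : ∑ j, (E j).indicator (1 : Ω → ℝ≥0∞) ω
            = ((Finset.univ.filter (fun j : Fin n => ω ∈ E j)).card : ℝ≥0∞) := by
          simp [Set.indicator_apply, Finset.sum_boole]
        rw [this, hhom ω]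
    _ = (k : ℝ≥0∞) * μ C' := by rw [setLIntegral_const]

lemma sum_meas_inter_real {Ω : Type*} [MeasurableSpace Ω] (μ : Measure Ω)
    [IsProbabilityMeasure μ] (n k : ℕ)
    (E : Fin n → Set Ω) (hE : ∀ i, MeasurableSet (E i))
    (hhom : ∀ ω : Ω, (Finset.univ.filter (fun j : Fin n => ω ∈ E j)).card = k)
    (C' : Set Ω) :
    ∑ j, (μ (E j ∩ C')).toReal = (k : ℝ) * (μ C').toReal := by
  have h := sum_meas_inter μ n k E hE hhom C'
  have := congrArg ENNReal.toReal h
  rw [ENNReal.toReal_sum (fun j _ => measure_ne_top μ _), ENNReal.toReal_mul] at this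
  simpa using this

/-- A `k`-homogeneous distribution of binary variables satisfying conditional pairwise
negative correlation has one-sided influence row sums `Σ_j |I_μ^S(i,j)| = 2(1 − q_i) ≤ 2`,
i.e., it is one-sided `ℓ∞`-independent with parameter 2. -/
theorem influence_row_sum_le_two {Ω : Type*} [MeasurableSpace Ω]
    (μ : Measure Ω) [IsProbabilityMeasure μ] (n k : ℕ)
    (E : Fin n → Set Ω) (hE : ∀ i, MeasurableSet (E i))
    (hhom : ∀ ω : Ω, (Finset.univ.filter (fun j : Fin n => ω ∈ E j)).card = k)
    (S : Finset (Fin n)) (i : Fin n) (hi : i ∉ S)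
    (C : Set Ω) (hC : C = ⋂ ℓ ∈ S, E ℓ)
    (hCpos : 0 < (μ C).toReal) (hiCpos : 0 < (μ (E i ∩ C)).toReal)
    (hCNC : ∀ a b : Fin n, a ∉ S → b ∉ S → a ≠ b →
      (μ (E a ∩ E b ∩ C)).toReal * (μ C).toReal ≤ (μ (E a ∩ C)).toReal * (μ (E b ∩ C)).toReal) :
    (∑ j, |if j ∈ S then (0 : ℝ) else
        (μ (E j ∩ (E i ∩ C))).toReal / (μ (E i ∩ C)).toReal - (μ (E j ∩ C)).toReal / (μ C).toReal|)
        = 2 * (1 - (μ (E i ∩ C)).toReal / (μ C).toReal) ∧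
      (∑ j, |if j ∈ S then (0 : ℝ) else
        (μ (E j ∩ (E i ∩ C))).toReal / (μ (E i ∩ C)).toReal - (μ (E j ∩ C)).toReal / (μ C).toReal|)
        ≤ 2 := by
  set D0 : ℝ := (μ C).toReal with hD0
  set D1 : ℝ := (μ (E i ∩ C)).toReal with hD1
  set a : Fin n → ℝ := fun j => (μ (E j ∩ (E i ∩ C))).toReal / D1 with ha
  set b : Fin n → ℝ := fun j => (μ (E j ∩ C)).toReal / D0 with hb
  set t : Fin n → ℝ := fun j => if j ∈ S then (0 : ℝ) else a j - b j with ht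
  have hCsub : ∀ j ∈ S, C ⊆ E j := by
    intro j hj
    rw [hC]
    exact Set.biInter_subset_of_mem hj
  -- values on S
  have haS : ∀ j ∈ S, a j = 1 := by
    intro j hj
    have : E j ∩ (E i ∩ C) = E i ∩ C := by
      apply Set.inter_eq_self_of_subset_right
      exact Set.inter_subset_right.trans (hCsub j hj)
    simp [ha, this, div_self (ne_of_gt hiCpos), hD1]
    exact ne_of_gt hiCpos
  have hbS : ∀ j ∈ S, b j = 1 := by
    intro j hj
    have : E j ∩ C = C := Set.inter_eq_self_of_subset_right (hCsub j hj)
    simp [hb, this, div_self (ne_of_gt hCpos), hD0]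
    exact ne_of_gt hCpos
  -- total sums
  have hsa : ∑ j, a j = (k : ℝ) := by
    have := sum_meas_inter_real μ n k E hE hhom (E i ∩ C)
    rw [ha]
    rw [← Finset.sum_div, this]
    field_simp
    rfl
  have hsb : ∑ j, b j = (k : ℝ) := by
    have := sum_meas_inter_real μ n k E hE hhom C
    rw [hb, ← Finset.sum_div, this]
    field_simp
    rfl
  -- signed sum is zero
  have hsum0 : ∑ j, t j = 0 := by
    have h2 : ∀ j, t j = (a j - b j) - (if j ∈ S then a j - b j else 0) := by
      intro j; by_cases hj : j ∈ S <;> simp [ht, hj]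
    calc ∑ j, t j = ∑ j, ((a j - b j) - (if j ∈ S then a j - b j else 0)) :=
          Finset.sum_congr rfl fun j _ => h2 j
      _ = (∑ j, (a j - b j)) - ∑ j, (if j ∈ S then a j - b j else 0) := by
          rw [Finset.sum_sub_distrib]
      _ = 0 := by
          rw [Finset.sum_sub_distrib, hsa, hsb, Finset.sum_ite_mem, Finset.univ_inter]
          have : ∑ j ∈ S, (a j - b j) = 0 :=
            Finset.sum_eq_zero fun j hj => by rw [haS j hj, hbS j hj]; ring
          rw [this]; ring
  -- each off-diagonal term is nonpositive
  have hneg : ∀ j, j ∉ S → j ≠ i → a j - b j ≤ 0 := by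
    intro j hjS hji
    have h := hCNC j i hjS hi hji
    have : (μ (E j ∩ (E i ∩ C))).toReal * D0 ≤ (μ (E j ∩ C)).toReal * D1 := by
      rw [← Set.inter_assoc]; exact h
    rw [ha, hb]
    simp only
    rw [div_sub_div _ _ (ne_of_gt hiCpos) (ne_of_gt hCpos)]
    apply div_nonpos_of_nonpos_of_nonneg
    · linarith
    · positivity
  -- diagonal term
  have hti : t i = 1 - D1 / D0 := by
    have : E i ∩ (E i ∩ C) = E i ∩ C := by rw [← Set.inter_assoc, Set.inter_self]
    simp [ht, hi, ha, hb, this, div_self (ne_of_gt hiCpos)]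
    show D1 / D1 - D1 / D0 = 1 - D1 / D0
    rw [div_self (ne_of_gt hiCpos)]
  have hq1 : D1 / D0 ≤ 1 := by
    apply div_le_one_of_le₀
    · exact ENNReal.toReal_mono (measure_ne_top μ _) (measure_mono Set.inter_subset_right)
    · exact le_of_lt hCpos
  have hqnn : 0 ≤ D1 / D0 := div_nonneg hiCpos.le hCpos.le
  -- sum of absolute values
  have habs : ∀ j, |t j| = 2 * max (t j) 0 - t j := by
    intro j
    rcases le_total (t j) 0 with h | h
    · rw [abs_of_nonpos h, max_eq_right h]; ring
    · rw [abs_of_nonneg h, max_eq_left h]; ring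
  have hmax : ∑ j, max (t j) 0 = t i := by
    rw [Finset.sum_eq_single i]
    · rw [max_eq_left]; rw [hti]; linarith
    · intro j _ hji
      by_cases hjS : j ∈ S
      · simp [ht, hjS]
      · have := hneg j hjS hji
        rw [max_eq_right]; simpa [ht, hjS] using this
    · simp
  have hkey : (∑ j, |t j|) = 2 * (1 - D1 / D0) := by
    calc ∑ j, |t j| = ∑ j, (2 * max (t j) 0 - t j) :=
          Finset.sum_congr rfl fun j _ => habs j
      _ = 2 * (∑ j, max (t j) 0) - ∑ j, t j := by
          rw [Finset.sum_sub_distrib, Finset.mul_sum]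
      _ = 2 * (1 - D1 / D0) := by rw [hmax, hsum0, hti]; ring
  refine ⟨hkey, ?_⟩
  rw [hkey]
  nlinarith
end
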